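/- Let l ≥ 1, L = 2^l, F = [[1,0],[1,1]] over GF(2), and B_L = F^{⊗l} with rows and columns indexed 1,…,L. Fix i with 1 ≤ i ≤ L and set T = 2^{⌈log₂(L+1−i)⌉}. Then: (a) for every row index k with i ≤ k ≤ L and every column index j with 1 ≤ j ≤ L − T, (B_L)_{k,j} = (B_L)_{k,j+T}; and (b) T is minimal with this property among powers of two, i.e., if T' = 2^a < T then there exist k with i ≤ k ≤ L and j with 1 ≤ j ≤ L − T' such that (B_L)_{k,j} ≠ (B_L)_{k,j+T'}. Consequently the columns of B̃_L(i) consist of β_L(i) = L/2^{⌈log₂(L+1−i)⌉} identical repetitions of its first L/β_L(i) columns. -/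

import Mathlib

/-- The 2×2 polarization kernel `F = [[1,0],[1,1]]` over `GF(2)`. -/
def polarF : Matrix (Fin 2) (Fin 2) (ZMod 2) := !![1, 0; 1, 1]

/-- `polarB l` is the `l`-fold Kronecker power `F^{⊗l}` of the polarization kernel,
with rows and columns reindexed by `Fin (2^l)` (row-major order), so that
`B_L = B_{L/2} ⊗ F` with `L = 2^l`. -/
def polarB : (l : ℕ) → Matrix (Fin (2 ^ l)) (Fin (2 ^ l)) (ZMod 2)
  | 0 => 1
  | l + 1 =>
      Matrix.reindex (finProdFinEquiv.trans (finCongr (pow_succ 2 l).symm))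
        (finProdFinEquiv.trans (finCongr (pow_succ 2 l).symm))
        (Matrix.kroneckerMap (· * ·) (polarB l) polarF)

/-- `polarBt l i` is the `i`-th polarization submatrix `B̃_L(i)` (with `i` 1-indexed,
`L = 2^l`): the matrix obtained from `B_L` by replacing its first `i - 1` rows with zeros. -/
def polarBt (l : ℕ) (i : ℕ) : Matrix (Fin (2 ^ l)) (Fin (2 ^ l)) (ZMod 2) :=
  Matrix.of fun r c => if i - 1 ≤ r.val then polarB l r c else 0

lemma and_eq_self_iff (j k : ℕ) : j &&& k = j ↔ ∀ t, j.testBit t = true → k.testBit t = true := by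
  constructor
  · intro h t ht
    have := congrArg (fun x => x.testBit t) h
    simpa [Nat.testBit_and, ht] using this
  · intro h
    apply Nat.eq_of_testBit_eq
    intro t
    rw [Nat.testBit_and]
    cases hj : j.testBit t
    · simp
    · simp [h t hj]

lemma and_eq_self_step (j k : ℕ) :
    j &&& k = j ↔ (j / 2 &&& k / 2 = j / 2 ∧ j % 2 ≤ k % 2) := by
  simp only [and_eq_self_iff]
  constructor
  · intro h
    refine ⟨fun t ht => ?_, ?_⟩
    · rw [← Nat.testBit_succ] at ht ⊢
      exact h _ ht
    · have h0 := h 0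
      simp only [Nat.testBit_zero, decide_eq_true_eq] at h0
      rcases Nat.mod_two_eq_zero_or_one j with hj | hj
      · omega
      · have := h0 hj; omega
  · rintro ⟨h1, h2⟩ t ht
    cases t with
    | zero =>
      simp only [Nat.testBit_zero, decide_eq_true_eq] at ht ⊢
      omega
    | succ t =>
      rw [Nat.testBit_succ] at ht ⊢
      exact h1 t ht

lemma polarF_apply (a b : Fin 2) : polarF a b = if (b : ℕ) ≤ (a : ℕ) then 1 else 0 := by
  fin_cases a <;> fin_cases b <;> simp [polarF]

lemma polarB_apply (l : ℕ) : ∀ (k j : Fin (2 ^ l)),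
    polarB l k j = if j.val &&& k.val = j.val then 1 else 0 := by
  induction l with
  | zero =>
    intro k j
    have hk0 : (k : ℕ) = 0 := Nat.lt_one_iff.mp (by simpa using k.isLt)
    have hj0 : (j : ℕ) = 0 := Nat.lt_one_iff.mp (by simpa using j.isLt)
    have hkj : j = k := Fin.ext (by omega)
    subst hkj
    simp [polarB, Matrix.one_apply, hj0]
  | succ l ih =>
    intro k j
    rw [polarB]
    simp only [Matrix.reindex_apply, Matrix.submatrix_apply, Equiv.symm_trans_apply,
      finProdFinEquiv_symm_apply, Matrix.kroneckerMap_apply]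
    rw [ih]
    have hd : ∀ x : Fin (2 ^ (l + 1)),
        ((((finCongr (pow_succ 2 l).symm).symm x).divNat : Fin (2 ^ l)) : ℕ) = x.val / 2 :=
      fun _ => rfl
    have hm : ∀ x : Fin (2 ^ (l + 1)),
        ((((finCongr (pow_succ 2 l).symm).symm x).modNat : Fin 2) : ℕ) = x.val % 2 :=
      fun _ => rfl
    rw [polarF_apply, hd, hd, hm, hm]
    simp only [and_eq_self_step (j : ℕ) (k : ℕ)]
    by_cases hA : (j : ℕ) / 2 &&& (k : ℕ) / 2 = (j : ℕ) / 2 <;>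
      by_cases hB : (j : ℕ) % 2 ≤ (k : ℕ) % 2 <;>
        simp [hA, hB]

lemma high_bits_one {l m k : ℕ} (hk1 : 2 ^ l - 2 ^ m ≤ k) (hk2 : k < 2 ^ l)
    {t : ℕ} (h1 : m ≤ t) (h2 : t < l) : k.testBit t = true := by
  rw [Nat.testBit_eq_decide_div_mod_eq]
  have hpow : (2 : ℕ) ^ m ≤ 2 ^ t := Nat.pow_le_pow_right (by norm_num) h1
  have hPQ : (2 : ℕ) ^ t * 2 ^ (l - t) = 2 ^ l := by
    rw [← pow_add]; congr 1; omega
  have hq1 : k / 2 ^ t < 2 ^ (l - t) := Nat.div_lt_of_lt_mul (by omega)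
  have hq2 : 2 ^ (l - t) - 1 ≤ k / 2 ^ t := by
    rw [Nat.le_div_iff_mul_le (Nat.two_pow_pos t)]
    have hexp : (2 ^ (l - t) - 1) * 2 ^ t = 2 ^ l - 2 ^ t := by
      rw [Nat.sub_mul, one_mul, mul_comm, hPQ]
    omega
  have hdiv : k / 2 ^ t = 2 ^ (l - t) - 1 := by omega
  rw [hdiv]
  have h2d : 2 ∣ 2 ^ (l - t) := dvd_pow_self 2 (by omega)
  have h2p : 1 ≤ 2 ^ (l - t) := Nat.one_le_two_pow
  simp only [decide_eq_true_eq]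
  omega

lemma and_eq_self_mod {l m k j : ℕ} (hk1 : 2 ^ l - 2 ^ m ≤ k) (hk2 : k < 2 ^ l)
    (hj : j < 2 ^ l) :
    (j &&& k = j) ↔ ((j % 2 ^ m) &&& k = j % 2 ^ m) := by
  simp only [and_eq_self_iff]
  have hB : ∀ t, l ≤ t → j.testBit t = false := fun t ht =>
    Nat.testBit_lt_two_pow (lt_of_lt_of_le hj (Nat.pow_le_pow_right (by norm_num) ht))
  constructor
  · intro h t ht
    rw [Nat.testBit_mod_two_pow] at ht
    simp only [Bool.and_eq_true, decide_eq_true_eq] at ht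
    exact h t ht.2
  · intro h t ht
    by_cases htm : t < m
    · apply h
      rw [Nat.testBit_mod_two_pow]
      simp [htm, ht]
    · by_cases htl : t < l
      · exact high_bits_one hk1 hk2 (by omega) htl
      · rw [hB t (by omega)] at ht
        exact absurd ht (by simp)

lemma polarB_period {l m : ℕ} (k j j' : Fin (2 ^ l))
    (hk : 2 ^ l - 2 ^ m ≤ (k : ℕ)) (hjj : (j : ℕ) % 2 ^ m = (j' : ℕ) % 2 ^ m) :
    polarB l k j = polarB l k j' := by
  rw [polarB_apply, polarB_apply]
  simp only [and_eq_self_mod hk k.isLt j.isLt, and_eq_self_mod hk k.isLt j'.isLt, hjj]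

/-- Let `L = 2^l`, `1 ≤ i ≤ L`, and `T = 2^{⌈log₂(L+1−i)⌉}`. Then
(a) for every row of `B_L` with (1-indexed) index `≥ i` the columns are `T`-periodic:
entries at (0-indexed) columns `c` and `c + T` agree whenever `c + T < L`;
(b) `T` is the least power of two with this property: for any power `2^a < T` some such row
has two entries at distance `2^a` that differ;
(c) consequently the columns of `B̃_L(i)` consist of `β_L(i) = L / T` identical repetitions
of its first `T = L / β_L(i)` columns (each column equals the column of its index mod `T`). -/
theorem polarB_column_period (l : ℕ) (hl : 1 ≤ l) (i : ℕ) (h1 : 1 ≤ i) (hL : i ≤ 2 ^ l)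
    (T : ℕ) (hT : T = 2 ^ Nat.clog 2 (2 ^ l + 1 - i)) :
    (∀ k : Fin (2 ^ l), i ≤ k.val + 1 →
        ∀ c : ℕ, ∀ (hc : c + T < 2 ^ l),
          polarB l k ⟨c, Nat.lt_of_le_of_lt (Nat.le_add_right _ _) hc⟩
            = polarB l k ⟨c + T, hc⟩) ∧
    (∀ a : ℕ, 2 ^ a < T →
        ∃ (k : Fin (2 ^ l)) (c : ℕ) (hc : c + 2 ^ a < 2 ^ l),
          i ≤ k.val + 1 ∧
            polarB l k ⟨c, Nat.lt_of_le_of_lt (Nat.le_add_right _ _) hc⟩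
              ≠ polarB l k ⟨c + 2 ^ a, hc⟩) ∧
    (∀ r c : Fin (2 ^ l),
        polarBt l i r c
          = polarBt l i r ⟨c.val % T, Nat.lt_of_le_of_lt (Nat.mod_le _ _) c.isLt⟩) := by
  obtain ⟨m, hm⟩ : ∃ m, Nat.clog 2 (2 ^ l + 1 - i) = m := ⟨_, rfl⟩
  rw [hm] at hT
  have h2l : 1 ≤ 2 ^ l := Nat.one_le_two_pow
  have hTle : 2 ^ l + 1 - i ≤ 2 ^ m := by
    have := Nat.le_pow_clog one_lt_two (2 ^ l + 1 - i)
    rwa [hm] at this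
  have hml : m ≤ l := by
    rw [← hm]
    exact (Nat.clog_le_iff_le_pow one_lt_two).mpr (show 2 ^ l + 1 - i ≤ 2 ^ l by omega)
  have hTm : T = 2 ^ m := hT
  have hrow : ∀ k : Fin (2 ^ l), i ≤ k.val + 1 → 2 ^ l - 2 ^ m ≤ (k : ℕ) := by
    intro k hk; omega
  refine ⟨?_, ?_, ?_⟩
  · -- (a) periodicity
    intro k hk c hc
    exact polarB_period _ _ _ (hrow k hk) (by simp [hTm, Nat.add_mod_right])
  · -- (b) minimality
    intro a ha
    rw [hTm] at ha
    have hma : a < m := (Nat.pow_lt_pow_iff_right one_lt_two).mp ha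
    have hn2 : 2 ≤ 2 ^ l + 1 - i := by
      by_contra hcon
      have hi : 2 ^ l + 1 - i = 1 := by omega
      rw [hi, Nat.clog_one_right] at hm
      omega
    have hpred : 2 ^ (m - 1) < 2 ^ l + 1 - i := by
      have h := Nat.pow_pred_clog_lt_self one_lt_two hn2
      rw [hm] at h
      exact h
    have h2am : (2 : ℕ) ^ a ≤ 2 ^ (m - 1) := Nat.pow_le_pow_right (by norm_num) (by omega)
    have hal : a < l := by
      have : (2 : ℕ) ^ m ≤ 2 ^ l := Nat.pow_le_pow_right (by norm_num) hml
      exact (Nat.pow_lt_pow_iff_right one_lt_two).mp (by omega)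
    have h2al : (2 : ℕ) ^ a < 2 ^ l := Nat.pow_lt_pow_right one_lt_two hal
    have hpa : (1 : ℕ) ≤ 2 ^ a := Nat.one_le_two_pow
    have hpm1 : (1 : ℕ) ≤ 2 ^ (m - 1) := Nat.one_le_two_pow
    have hb1 : 2 ^ l - 1 - 2 ^ a < 2 ^ l := by omega
    have hb2 : 0 + 2 ^ a < 2 ^ l := by omega
    have hb3 : i ≤ 2 ^ l - 1 - 2 ^ a + 1 := by omega
    refine ⟨⟨2 ^ l - 1 - 2 ^ a, hb1⟩, 0, hb2, hb3, ?_⟩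
    rw [polarB_apply, polarB_apply]
    have hc1 : (0 : ℕ) &&& (2 ^ l - 1 - 2 ^ a) = 0 := Nat.zero_and _
    have hc2 : ¬ ((0 + 2 ^ a) &&& (2 ^ l - 1 - 2 ^ a) = 0 + 2 ^ a) := by
      rw [Nat.zero_add, and_eq_self_iff]
      intro hcon
      have hbit := hcon a Nat.testBit_two_pow_self
      rw [Nat.testBit_eq_decide_div_mod_eq] at hbit
      have hPQ : (2 : ℕ) ^ a * 2 ^ (l - a) = 2 ^ l := by
        rw [← pow_add]; congr 1; omega
      have hmul : 2 ^ a * (2 ^ (l - a) - 2) = 2 ^ l - 2 ^ (a + 1) := by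
        rw [Nat.mul_sub, hPQ, pow_succ]
      have hsplit : 2 ^ l - 1 - 2 ^ a = 2 ^ a * (2 ^ (l - a) - 2) + (2 ^ a - 1) := by
        have h2al1 : (2 : ℕ) ^ (a + 1) ≤ 2 ^ l := Nat.pow_le_pow_right (by norm_num) (by omega)
        have he : (2:ℕ) ^ (a+1) = 2 * 2 ^ a := by rw [pow_succ]; ring
        generalize hPab : (2:ℕ) ^ a * (2 ^ (l - a) - 2) = Pab at *
        omega
      have hdiv : (2 ^ l - 1 - 2 ^ a) / 2 ^ a = 2 ^ (l - a) - 2 := by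
        rw [hsplit, Nat.mul_add_div (Nat.two_pow_pos a),
          Nat.div_eq_of_lt (by omega)]
        omega
      rw [hdiv] at hbit
      have h2d : 2 ∣ 2 ^ (l - a) := dvd_pow_self 2 (by omega)
      simp only [decide_eq_true_eq] at hbit
      omega
    simp only [hc1, hc2, if_true, if_false, if_pos rfl, if_neg hc2]
    decide
  · -- (c) columns repeat
    intro r c
    simp only [polarBt, Matrix.of_apply]
    by_cases hr : i - 1 ≤ r.val
    · simp only [hr, if_true]
      exact polarB_period _ _ _ (hrow r (by omega)) (by simp [hTm, Nat.mod_mod_of_dvd _ dvd_rfl])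
    · simp [hr]
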